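/- arXiv:2501.04253 — 4 statements merged into one kernel-verified Lean document; each statement's English description precedes it below -/
import Mathlib

section
/- Let α ≥ 1 be a positive integer and β > 0 a real number. Let c' : Fin n → ℕ → ℝ be cost functions such that each c' j is non-decreasing and c' j (α * t) = β * c j t for every job j and every time t ∈ ℕ. If S is an optimal schedule for the instance with processing times p, release times r, and costs c, then the schedule j ↦ α * S j is an optimal schedule for the scaled instance with processing times j ↦ α * p j, release times j ↦ α * r j, and costs c'. -/
/-- A schedule `S` is feasible for processing times `p` and release times `r`:
every job starts no earlier than its release time, and no two jobs overlap. -/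
def Feasible {n : ℕ} (p r S : Fin n → ℕ) : Prop :=
  (∀ j, r j ≤ S j) ∧ ∀ i j, i ≠ j → S i + p i ≤ S j ∨ S j + p j ≤ S i

/-- A schedule `S` is optimal for `(p, r, c)`: it is feasible and its total
starting cost is no larger than that of any feasible schedule. -/
def Optimal {n : ℕ} (p r : Fin n → ℕ) (c : Fin n → ℕ → ℝ) (S : Fin n → ℕ) : Prop :=
  Feasible p r S ∧ ∀ S', Feasible p r S' → ∑ j, c j (S j) ≤ ∑ j, c j (S' j)

/-- Scaling an instance by `α` (with costs satisfying `c' j (α t) = β · c j t`,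
each `c' j` non-decreasing) turns an optimal schedule `S` into the optimal
schedule `j ↦ α * S j` of the scaled instance. -/
theorem scaled_schedule_optimal {n : ℕ} (hn : 1 ≤ n) (p r : Fin n → ℕ)
    (hp : ∀ j, 0 < p j) (c c' : Fin n → ℕ → ℝ) (α : ℕ) (hα : 1 ≤ α)
    (β : ℝ) (hβ : 0 < β) (hmono : ∀ j, Monotone (c' j))
    (hcc' : ∀ j t, c' j (α * t) = β * c j t) (S : Fin n → ℕ)
    (hopt : Optimal p r c S) :
    Optimal (fun j => α * p j) (fun j => α * r j) c' (fun j => α * S j) := by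
  obtain ⟨⟨hrel, hov⟩, hmin⟩ := hopt
  have hα0 : 0 < α := hα
  constructor
  · constructor
    · intro j; exact Nat.mul_le_mul_left α (hrel j)
    · intro i j hij
      rcases hov i j hij with h | h
      · left; calc α * S i + α * p i = α * (S i + p i) := (Nat.mul_add _ _ _).symm
          _ ≤ α * S j := Nat.mul_le_mul_left α h
      · right; calc α * S j + α * p j = α * (S j + p j) := (Nat.mul_add _ _ _).symm
          _ ≤ α * S i := Nat.mul_le_mul_left α h
  · intro S' ⟨hrel', hov'⟩
    set T : Fin n → ℕ := fun j => S' j / α with hT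
    have hTfeas : Feasible p r T := by
      constructor
      · intro j
        rw [Nat.le_div_iff_mul_le hα0]
        calc r j * α = α * r j := Nat.mul_comm _ _
          _ ≤ S' j := hrel' j
      · intro i j hij
        rcases hov' i j hij with h | h
        · left
          rw [Nat.le_div_iff_mul_le hα0, Nat.add_mul]
          calc S' i / α * α + p i * α ≤ S' i + α * p i := by
                exact Nat.add_le_add (Nat.div_mul_le_self _ _) (Nat.mul_comm (p i) α).le
            _ ≤ S' j := h
        · right
          rw [Nat.le_div_iff_mul_le hα0, Nat.add_mul]
          calc S' j / α * α + p j * α ≤ S' j + α * p j := by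
                exact Nat.add_le_add (Nat.div_mul_le_self _ _) (Nat.mul_comm (p j) α).le
            _ ≤ S' i := h
    calc ∑ j, c' j (α * S j) = ∑ j, β * c j (S j) := by
          simp only [hcc']
      _ = β * ∑ j, c j (S j) := (Finset.mul_sum _ _ _).symm
      _ ≤ β * ∑ j, c j (T j) := by
          exact mul_le_mul_of_nonneg_left (hmin T hTfeas) hβ.le
      _ = ∑ j, β * c j (T j) := Finset.mul_sum _ _ _
      _ = ∑ j, c' j (α * T j) := by simp only [hcc']
      _ ≤ ∑ j, c' j (S' j) := by
          apply Finset.sum_le_sum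
          intro j _
          apply hmono j
          calc α * (S' j / α) = S' j / α * α := Nat.mul_comm _ _
            _ ≤ S' j := Nat.div_mul_le_self _ _
end

section
/- Let α ≥ 1 be a positive integer such that α ∣ p j and α ∣ r j for every job j. Then for every schedule S that is feasible for (p, r), there exists a schedule S' that is feasible for (p, r) with α ∣ S' j and S' j ≤ S j for every job j. (Consequently, if every cost function c j is non-decreasing, the instance always admits an α-divisible feasible schedule whose total cost is no larger.) -/
/-- If `α` divides all processing and release times, then every feasible
schedule can be replaced by an `α`-divisible feasible schedule that starts
every job no later; consequently if each cost function is non-decreasing,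
the `α`-divisible schedule has total cost no larger. -/
theorem exists_divisible_feasible_le {n : ℕ} (hn : 1 ≤ n) (p r : Fin n → ℕ)
    (hp : ∀ j, 0 < p j) (α : ℕ) (hα : 1 ≤ α)
    (hdp : ∀ j, α ∣ p j) (hdr : ∀ j, α ∣ r j) :
    ∀ S : Fin n → ℕ, Feasible p r S →
      ∃ S' : Fin n → ℕ, Feasible p r S' ∧ (∀ j, α ∣ S' j) ∧ (∀ j, S' j ≤ S j) ∧
        ∀ c : Fin n → ℕ → ℝ, (∀ j, Monotone (c j)) →
          ∑ j, c j (S' j) ≤ ∑ j, c j (S j) := by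
  intro S hS
  have key : ∀ m x : ℕ, α ∣ m → m ≤ x → m ≤ α * (x / α) := by
    intro m x hm hmx
    obtain ⟨k, rfl⟩ := hm
    exact Nat.mul_le_mul_left α (Nat.le_div_iff_mul_le (by omega) |>.2
      (by rw [Nat.mul_comm]; exact hmx))
  refine ⟨fun j => α * (S j / α), ⟨fun j => key _ _ (hdr j) (hS.1 j), ?_⟩,
    fun j => ⟨_, rfl⟩, fun j => Nat.mul_div_le _ _, ?_⟩
  · intro i j hij
    dsimp only
    rcases hS.2 i j hij with h | h
    · left
      have : α ∣ α * (S i / α) + p i := Dvd.dvd.add ⟨_, rfl⟩ (hdp i)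
      exact key _ _ this (le_trans (by have := Nat.mul_div_le (S i) α; omega) h)
    · right
      have : α ∣ α * (S j / α) + p j := Dvd.dvd.add ⟨_, rfl⟩ (hdp j)
      exact key _ _ this (le_trans (by have := Nat.mul_div_le (S j) α; omega) h)
  · intro c hc
    exact Finset.sum_le_sum fun j _ => hc j (Nat.mul_div_le _ _)
end

section
/- Let S be a schedule feasible for (p, r), and let σ : Fin n ≃ Fin n be a permutation such that k ↦ S (σ k) is strictly increasing in the position k. Then the list schedule L associated with σ satisfies L j ≤ S j for every job j (left-shifting a feasible schedule in its own processing order never delays any job). -/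
/-- Left-shifting a feasible schedule in its own processing order never delays
any job: if `σ` lists the jobs of a feasible schedule `S` in increasing order
of starting times, then the list schedule `L` of `σ` satisfies `L j ≤ S j`. -/
theorem list_schedule_le_of_feasible {n : ℕ} (hn : 1 ≤ n) (p r : Fin n → ℕ)
    (hp : ∀ j, 0 < p j) (S : Fin n → ℕ) (hS : Feasible p r S)
    (σ : Equiv.Perm (Fin n)) (hσ : StrictMono (fun k : Fin n => S (σ k)))
    (L : Fin n → ℕ)
    (hL0 : L (σ ⟨0, hn⟩) = r (σ ⟨0, hn⟩))
    (hLs : ∀ (k : ℕ) (h : k + 1 < n),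
      L (σ ⟨k + 1, h⟩) =
        max (r (σ ⟨k + 1, h⟩))
          (L (σ ⟨k, Nat.lt_of_succ_lt h⟩) + p (σ ⟨k, Nat.lt_of_succ_lt h⟩))) :
    ∀ j, L j ≤ S j := by
  have key : ∀ (k : ℕ) (h : k < n), L (σ ⟨k, h⟩) ≤ S (σ ⟨k, h⟩) := by
    intro k
    induction k with
    | zero => intro h; rw [hL0]; exact hS.1 _
    | succ k ih =>
      intro h
      have hk : k < n := Nat.lt_of_succ_lt h
      rw [hLs k h]
      apply max_le (hS.1 _)
      have hne : σ ⟨k, hk⟩ ≠ σ ⟨k + 1, h⟩ := by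
        simp [Fin.ext_iff]
      have hlt : S (σ ⟨k, hk⟩) < S (σ ⟨k + 1, h⟩) := by
        have := hσ (show (⟨k, hk⟩ : Fin n) < ⟨k + 1, h⟩ by simp [Fin.lt_def])
        exact this
      rcases hS.2 _ _ hne with h1 | h1
      · exact le_trans (add_le_add_left (ih hk) _) h1
      · omega
  intro j
  have := key (σ.symm j) (σ.symm j).isLt
  simpa using this
end

section
/- Let ω : Fin n → ℝ be injective, define S̃ j = ∑_{j' ≠ j with ω j' < ω j} p j' (the sum of the processing times of all jobs with strictly smaller priority value), and define the pushback Δ j = max(0, max_{j' with ω j' ≤ ω j} ((r j' : ℤ) - S̃ j')), a nonnegative integer. Then the schedule S j = S̃ j + Δ j is feasible for (p, r): S j ≥ r j for every job j, and for all i ≠ j, either S i + p i ≤ S j or S j + p j ≤ S i. -/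
/-- Pushing back the tight schedule `S̃` (jobs ordered by injective priorities
`ω`) by the pushback amounts `Δ j = max(0, max_{ω j' ≤ ω j} (r j' - S̃ j'))`
yields a schedule `S j = S̃ j + Δ j` feasible for `(p, r)`. -/
theorem pushback_schedule_feasible {n : ℕ} (hn : 1 ≤ n) (p r : Fin n → ℕ)
    (hp : ∀ j, 0 < p j) (ω : Fin n → ℝ) (hω : Function.Injective ω)
    (S' : Fin n → ℕ) (Δ : Fin n → ℤ) (S : Fin n → ℕ)
    (hS' : ∀ j, S' j =
      ∑ j' ∈ Finset.univ.filter (fun j' => j' ≠ j ∧ ω j' < ω j), p j')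
    (hΔ : ∀ j, Δ j = max 0
      ((Finset.univ.filter (fun j' => ω j' ≤ ω j)).sup'
        ⟨j, Finset.mem_filter.mpr ⟨Finset.mem_univ j, le_refl (ω j)⟩⟩
        (fun j' => (r j' : ℤ) - (S' j' : ℤ))))
    (hS : ∀ j, (S j : ℤ) = (S' j : ℤ) + Δ j) :
    Feasible p r S := by
  constructor
  · intro j
    have h1 : (r j : ℤ) - (S' j : ℤ) ≤ Δ j := by
      rw [hΔ j]
      refine le_max_of_le_right (Finset.le_sup' (fun j' => (r j' : ℤ) - (S' j' : ℤ)) ?_)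
      simp
    have h2 := hS j
    omega
  · have key : ∀ a b, ω a < ω b → S a + p a ≤ S b := by
      intro a b hab
      have hsum : S' a + p a ≤ S' b := by
        rw [hS' a, hS' b]
        have hnm : a ∉ Finset.univ.filter (fun j' => j' ≠ a ∧ ω j' < ω a) := by simp
        have hsub : insert a (Finset.univ.filter (fun j' => j' ≠ a ∧ ω j' < ω a)) ⊆
            Finset.univ.filter (fun j' => j' ≠ b ∧ ω j' < ω b) := by
          intro x hx
          simp only [Finset.mem_insert, Finset.mem_filter, Finset.mem_univ, true_and] at hx ⊢
          rcases hx with rfl | ⟨hxa, hxlt⟩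
          · exact ⟨fun h => absurd (h ▸ hab) (lt_irrefl _), hab⟩
          · exact ⟨fun h => absurd (h ▸ (hxlt.trans hab)) (lt_irrefl _), hxlt.trans hab⟩
        calc (∑ j' ∈ Finset.univ.filter (fun j' => j' ≠ a ∧ ω j' < ω a), p j') + p a
            = ∑ j' ∈ insert a (Finset.univ.filter (fun j' => j' ≠ a ∧ ω j' < ω a)), p j' := by
              rw [Finset.sum_insert hnm]; ring
          _ ≤ _ := Finset.sum_le_sum_of_subset hsub
      have hΔle : Δ a ≤ Δ b := by
        rw [hΔ a, hΔ b]
        refine max_le_max le_rfl (Finset.sup'_le _ _ fun x hx => Finset.le_sup' (fun j' => (r j' : ℤ) - (S' j' : ℤ)) ?_)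
        simp only [Finset.mem_filter, Finset.mem_univ, true_and] at hx ⊢
        exact hx.trans hab.le
      have ha := hS a; have hb := hS b
      omega
    intro i j hij
    have : ω i ≠ ω j := fun h => hij (hω h)
    rcases this.lt_or_gt with h | h
    · exact Or.inl (key i j h)
    · exact Or.inr (key j i h)
end
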